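/- arXiv:math/0505029 — 2 statements merged into one kernel-verified Lean document; each statement's English description precedes it below -/
import Mathlib

section
/- If x has order n and m = k·n for some k ≥ 1 with k odd and n ≥ 3 with m odd (i.e., both n and k odd), then tr((x + x⁻¹)^m) ≥ 2^k. -/
open Finset
open scoped Classical

private lemma aux_two_pow_le_choose : ∀ (b a : ℕ), 3 * b ≤ a → 2 ^ b ≤ a.choose b := by
  intro b
  induction b with
  | zero => simp
  | succ b ih =>
    intro a ha
    have hb : 3 * b ≤ a := by omega
    have h1 := ih a hb
    have h2 : Nat.choose a (b + 1) * (b + 1) = Nat.choose a b * (a - b) :=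
      Nat.choose_succ_right_eq a b
    have h3 : 2 * (b + 1) ≤ a - b := by omega
    have : 2 ^ (b + 1) * (b + 1) ≤ Nat.choose a (b + 1) * (b + 1) := by
      calc 2 ^ (b + 1) * (b + 1) = 2 ^ b * (2 * (b + 1)) := by ring
        _ ≤ Nat.choose a b * (a - b) := Nat.mul_le_mul h1 h3
        _ = Nat.choose a (b + 1) * (b + 1) := h2.symm
    exact Nat.le_of_mul_le_mul_right this (by omega)

private lemma aux_choose_mono_left {n a b : ℕ} (hab : a ≤ b) (hb : 2 * b ≤ n) :
    n.choose a ≤ n.choose b := by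
  induction b with
  | zero => simp [Nat.le_zero.mp hab]
  | succ b ih =>
    rcases Nat.eq_or_lt_of_le hab with h | h
    · rw [h]
    · have : a ≤ b := by omega
      have hb' : 2 * b ≤ n := by omega
      exact (ih this hb').trans (Nat.choose_le_succ_of_lt_half_left (by omega))

/-- If `x` has odd exact order `n ≥ 3` and `m = k·n` with `k ≥ 1` odd, then
`tr((x + x⁻¹)^m) ≥ 2^k` (as a real number: the trace is a nonnegative count, and we
compare its real part). -/
theorem stmt_8 {G : Type*} [Group G] (x : G) (n k m : ℕ) (hn : 3 ≤ n) (hnodd : Odd n)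
    (hk : 1 ≤ k) (hkodd : Odd k) (hx : orderOf x = n) (hm : m = k * n) :
    (2 : ℝ) ^ k ≤
      (((MonoidAlgebra.of ℂ G x + MonoidAlgebra.of ℂ G x⁻¹) ^ m).coeff (1 : G)).re := by
  have key : (((MonoidAlgebra.of ℂ G x + MonoidAlgebra.of ℂ G x⁻¹) ^ m).coeff (1 : G)).re
      = ∑ i ∈ range (m + 1),
          (if x ^ i * (x⁻¹) ^ (m - i) = 1 then (m.choose i : ℝ) else 0) := by
    have hc : Commute (MonoidAlgebra.of ℂ G x) (MonoidAlgebra.of ℂ G x⁻¹) := by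
      unfold Commute SemiconjBy
      rw [← map_mul, ← map_mul, mul_inv_cancel, inv_mul_cancel]
    rw [hc.add_pow, MonoidAlgebra.coeff_sum, Finsupp.finset_sum_apply, Complex.re_sum]
    refine Finset.sum_congr rfl fun i hi => ?_
    rw [← map_pow, ← map_pow, ← map_mul, MonoidAlgebra.of_apply, MonoidAlgebra.natCast_def,
      MonoidAlgebra.single_mul_single, one_mul, mul_one, MonoidAlgebra.coeff_single, Finsupp.single_apply,
      apply_ite Complex.re]
    simp
  rw [key]
  -- write k = 2t+1
  obtain ⟨t, ht⟩ := hkodd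
  have hm2 : m = t * n + (t + 1) * n := by rw [hm, ht]; ring
  have htn : t * n + n = (t + 1) * n := by ring
  have hxn : x ^ n = 1 := by rw [← hx]; exact pow_orderOf_eq_one x
  have hpow : ∀ j : ℕ, x ^ (j * n) = 1 := fun j => by
    rw [mul_comm, pow_mul, hxn, one_pow]
  have hipow : ∀ j : ℕ, (x⁻¹) ^ (j * n) = 1 := fun j => by
    rw [inv_pow, hpow, inv_one]
  have hsub : ({t * n, (t + 1) * n} : Finset ℕ) ⊆ range (m + 1) := by
    intro i hi
    simp only [Finset.mem_insert, Finset.mem_singleton] at hi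
    rcases hi with h | h <;> · rw [Finset.mem_range]; omega
  have hne : t * n ≠ (t + 1) * n := by omega
  have hbound : ∑ i ∈ ({t * n, (t + 1) * n} : Finset ℕ),
        (if x ^ i * (x⁻¹) ^ (m - i) = 1 then (m.choose i : ℝ) else 0)
      ≤ ∑ i ∈ range (m + 1),
          (if x ^ i * (x⁻¹) ^ (m - i) = 1 then (m.choose i : ℝ) else 0) := by
    refine Finset.sum_le_sum_of_subset_of_nonneg hsub fun i _ _ => ?_
    split <;> positivity
  refine le_trans ?_ hbound
  rw [Finset.sum_pair hne]
  have hc1 : x ^ (t * n) * (x⁻¹) ^ (m - t * n) = 1 := by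
    have : m - t * n = (t + 1) * n := by omega
    rw [this, hpow, hipow, one_mul]
  have hc2 : x ^ ((t + 1) * n) * (x⁻¹) ^ (m - (t + 1) * n) = 1 := by
    have : m - (t + 1) * n = t * n := by omega
    rw [this, hpow, hipow, one_mul]
  rw [if_pos hc1, if_pos hc2]
  have h3t : t * 3 ≤ t * n := Nat.mul_le_mul le_rfl hn
  rcases Nat.eq_zero_or_pos t with ht0 | ht1
  · subst ht0
    have hk1 : k = 1 := by omega
    have hmn : m = n := by rw [hm, hk1, one_mul]
    rw [hk1, hmn]
    norm_num [Nat.choose_self]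
  · -- k ≥ 3 : use 2^k ≤ C(m, k) ≤ C(m, t*n)
    have hkm : 3 * k ≤ m := by
      have : k * 3 ≤ k * n := Nat.mul_le_mul le_rfl hn
      omega
    have h1 : 2 ^ k ≤ m.choose k := aux_two_pow_le_choose k m hkm
    have h2 : m.choose k ≤ m.choose (t * n) :=
      aux_choose_mono_left (by omega) (by omega)
    have : (2 : ℝ) ^ k ≤ (m.choose (t * n) : ℝ) := by
      calc (2 : ℝ) ^ k = ((2 ^ k : ℕ) : ℝ) := by push_cast; ring
        _ ≤ (m.choose (t * n) : ℝ) := by exact_mod_cast h1.trans h2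
    have hnn : (0 : ℝ) ≤ (m.choose ((t + 1) * n) : ℝ) := by positivity
    linarith
end

section
/- For x of order n and m ∈ ℕ, writing the moment as a count: tr((x+x⁻¹)^m) = Σ_{j ∈ ℤ, nj ≡ m mod 2, |nj| ≤ m} C(m, (m + nj)/2). -/
open Finset

/-- For `x` of exact order `n ≥ 1` and `m ∈ ℕ`,
`tr((x+x⁻¹)^m) = Σ_{j ∈ ℤ, nj ≡ m (mod 2), |nj| ≤ m} C(m, (m + nj)/2)`. -/
theorem stmt_16 {G : Type*} [Group G] (x : G) (n : ℕ) (hn : 1 ≤ n) (hx : orderOf x = n)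
    (m : ℕ) :
    ((MonoidAlgebra.of ℂ G x + MonoidAlgebra.of ℂ G x⁻¹) ^ m).coeff (1 : G) =
      ∑ j ∈ (Finset.Icc (-(m : ℤ)) (m : ℤ)).filter
          (fun j => ((n : ℤ) * j) % 2 = (m : ℤ) % 2 ∧ |(n : ℤ) * j| ≤ (m : ℤ)),
        ((m.choose ((((m : ℤ) + (n : ℤ) * j) / 2).toNat)) : ℂ) := by
  classical
  have hn' : (1 : ℤ) ≤ n := by exact_mod_cast hn
  have hc : Commute (MonoidAlgebra.of ℂ G x) (MonoidAlgebra.of ℂ G x⁻¹) :=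
    ((Commute.refl x).inv_right).map (MonoidAlgebra.of ℂ G)
  rw [hc.add_pow, MonoidAlgebra.coeff_sum, Finset.sum_apply']
  have key : ∀ k ∈ range (m + 1),
      ((MonoidAlgebra.of ℂ G x) ^ k * (MonoidAlgebra.of ℂ G x⁻¹) ^ (m - k) *
          ((m.choose k : MonoidAlgebra ℂ G))).coeff (1 : G)
        = if (n : ℤ) ∣ (2 * k - m) then (m.choose k : ℂ) else 0 := by
    intro k hk
    simp only [mem_range] at hk
    have h1 : (MonoidAlgebra.of ℂ G x) ^ k * (MonoidAlgebra.of ℂ G x⁻¹) ^ (m - k)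
        = MonoidAlgebra.of ℂ G (x ^ ((2 * k - m : ℤ))) := by
      rw [← map_pow, ← map_pow, ← map_mul]
      congr 1
      rw [← zpow_natCast x k, ← zpow_natCast (x⁻¹) (m - k), inv_zpow, ← zpow_neg, ← zpow_add]
      congr 1
      omega
    rw [h1, MonoidAlgebra.of_apply, MonoidAlgebra.coeff_single_mul_apply]
    rw [MonoidAlgebra.natCast_def, one_mul, mul_one, MonoidAlgebra.coeff_single, Finsupp.single_apply]
    have h2 : x ^ ((2 * k - m : ℤ)) = 1 ↔ (n : ℤ) ∣ (2 * k - m) := by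
      rw [← orderOf_dvd_iff_zpow_eq_one, hx]
    by_cases hd : (n : ℤ) ∣ (2 * k - m)
    · rw [if_pos hd, if_pos (by rw [eq_comm, inv_eq_one]; exact h2.mpr hd)]
    · rw [if_neg hd, if_neg (fun h => hd (h2.mp (by rw [← inv_eq_one, ← h])))]
  rw [Finset.sum_congr rfl key, Finset.sum_ite, Finset.sum_const_zero, add_zero]
  symm
  apply Finset.sum_nbij' (i := fun j => (((m : ℤ) + (n : ℤ) * j) / 2).toNat)
    (j := fun k => (2 * (k : ℤ) - m) / n)
  · intro j hj
    simp only [mem_filter, mem_Icc, abs_le] at hj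
    obtain ⟨⟨h1, h2⟩, h3, h4, h5⟩ := hj
    simp only [mem_filter, mem_range]
    refine ⟨by omega, ?_⟩
    have h6 : 2 * ((((m : ℤ) + (n : ℤ) * j) / 2).toNat : ℤ) - m = (n : ℤ) * j := by omega
    rw [h6]
    exact Dvd.intro j rfl
  · intro k hk
    simp only [mem_filter, mem_range] at hk
    obtain ⟨h1, d, hd⟩ := hk
    simp only [mem_filter, mem_Icc, abs_le]
    set q := (2 * (k : ℤ) - m) / n with hq
    have hkey : (n : ℤ) * q = 2 * (k : ℤ) - m := by
      rw [hq, hd, Int.mul_ediv_cancel_left _ (by omega)]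
    have hqm : q ≤ m := by
      by_contra h
      push_neg at h
      have hq0 : (0 : ℤ) < q := by omega
      have := le_mul_of_one_le_left hq0.le hn'
      omega
    have hqm' : -(m : ℤ) ≤ q := by
      by_contra h
      push_neg at h
      have hq0 : q ≤ 0 := by omega
      have := mul_le_mul_of_nonpos_right hn' hq0
      rw [one_mul] at this
      omega
    refine ⟨⟨hqm', hqm⟩, ?_, ?_, ?_⟩ <;> omega
  · intro j hj
    simp only [mem_filter, mem_Icc, abs_le] at hj
    obtain ⟨⟨h1, h2⟩, h3, h4, h5⟩ := hj
    have h6 : 2 * ((((m : ℤ) + (n : ℤ) * j) / 2).toNat : ℤ) - m = (n : ℤ) * j := by omega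
    rw [h6, Int.mul_ediv_cancel_left _ (by omega)]
  · intro k hk
    simp only [mem_filter, mem_range] at hk
    obtain ⟨h1, d, hd⟩ := hk
    have hkey : (n : ℤ) * ((2 * (k : ℤ) - m) / n) = 2 * (k : ℤ) - m := by
      rw [hd, Int.mul_ediv_cancel_left _ (by omega)]
    rw [hkey]
    omega
  · intro j hj
    rfl
end
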